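/- Let L be a Lie algebra with a toral subalgebra h and let J be a C(L)-invariant ideal such that for some nonzero α ∈ h*, dim(J ∩ L_α) = 1 and the ideal of L generated by J ∩ L_α equals J. Then C(L) = F·id ⊕ {ψ ∈ C(L) : ψ(J) = 0}. -/

import Mathlib

set_option synthInstance.maxHeartbeats 800000


/-- Let `L` be a Lie algebra with a toral subalgebra `H`, and let `J` be a
centroid-invariant ideal such that for some nonzero weight `α`, the space
`J ∩ L_α` is one-dimensional and generates `J` as an ideal.  Then
`C(L) = F·id ⊕ {ψ ∈ C(L) : ψ(J) = 0}`. -/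
theorem centroid_decomposition_of_toral
    (F L : Type*) [Field F] [LieRing L] [LieAlgebra F L]
    (H : LieSubalgebra F L) [DecidableEq (Module.Dual F H)]
    (Lw : Module.Dual F H → Submodule F L)
    (hLw : ∀ (α : Module.Dual F H) (x : L),
      x ∈ Lw α ↔ ∀ h : H, ⁅(h : L), x⁆ = α h • x)
    (hdecomp : DirectSum.IsInternal Lw)
    (J : LieIdeal F L)
    (hJinv : ∀ χ : Module.End F L, (∀ x y : L, χ ⁅x, y⁆ = ⁅x, χ y⁆) →
      ∀ x ∈ J, χ x ∈ J)
    (α : Module.Dual F H) (hα : α ≠ 0)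
    (hdim : Module.finrank F ↥((J : Submodule F L) ⊓ Lw α) = 1)
    (hgen : LieSubmodule.lieSpan F L
      (((J : Submodule F L) ⊓ Lw α : Submodule F L) : Set L) = J)
    (χ : Module.End F L) (hχ : ∀ x y : L, χ ⁅x, y⁆ = ⁅x, χ y⁆) :
    ∃! c : F, ∃ ψ : Module.End F L,
      (∀ x y : L, ψ ⁅x, y⁆ = ⁅x, ψ y⁆) ∧ (∀ x ∈ J, ψ x = 0) ∧
      χ = c • (1 : Module.End F L) + ψ := by
  obtain ⟨⟨e, heS⟩, he0, hspan⟩ := finrank_eq_one_iff'.mp hdim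
  have heJ : e ∈ J := heS.1
  have heα : e ∈ Lw α := heS.2
  have hene : e ≠ 0 := fun h => he0 (Subtype.ext h)
  -- χ e ∈ Lw α
  have hχeα : χ e ∈ Lw α := by
    rw [hLw]
    intro h
    have h1 := hχ (h : L) e
    rw [(hLw α e).mp heα h, map_smul] at h1
    exact h1.symm
  have hχeJ : χ e ∈ J := hJinv χ hχ e heJ
  obtain ⟨c, hc⟩ := hspan ⟨χ e, hχeJ, hχeα⟩
  have hce : χ e = c • e := by
    have := congrArg (Subtype.val) hc
    exact this.symm
  refine ⟨c, ⟨χ - c • 1, ?_, ?_, by abel⟩, ?_⟩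
  · intro x y
    simp only [LinearMap.sub_apply, LinearMap.smul_apply, Module.End.one_apply,
      hχ x y, lie_smul, lie_sub]
  · -- vanishes on J
    have hψc : ∀ x y : L, (χ - c • 1) ⁅x, y⁆ = ⁅x, (χ - c • 1) y⁆ := by
      intro x y
      simp only [LinearMap.sub_apply, LinearMap.smul_apply, Module.End.one_apply,
        hχ x y, lie_smul, lie_sub]
    set ψ := χ - c • (1 : Module.End F L) with hψ
    let K : LieIdeal F L :=
      { LinearMap.ker ψ with
        lie_mem := fun {x m} hm => by
          simp only [Submodule.mem_carrier, SetLike.mem_coe, LinearMap.mem_ker] at hm ⊢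
          rw [hψc x m, hm, lie_zero] }
    have hJK : J ≤ K := by
      rw [← hgen]
      rw [LieSubmodule.lieSpan_le]
      intro x hx
      obtain ⟨t, ht⟩ := hspan ⟨x, hx⟩
      have hxe : t • e = x := congrArg Subtype.val ht
      show ψ x = 0
      rw [← hxe, map_smul]
      have : ψ e = 0 := by
        simp only [hψ, LinearMap.sub_apply, LinearMap.smul_apply, Module.End.one_apply, hce,
          sub_self]
      rw [this, smul_zero]
    intro x hx
    exact hJK hx
  · rintro c' ⟨ψ', _, hψ'J, hχeq⟩
    have h1 : χ e = c' • e := by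
      rw [hχeq]
      simp [hψ'J e heJ]
    have : (c - c') • e = 0 := by
      rw [sub_smul, ← hce, ← h1, sub_self]
    have h2 := (smul_eq_zero.mp this).resolve_right hene
    exact (sub_eq_zero.mp h2).symm
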